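/- Combining reductions: two finite simple graphs G and H with no isolated vertices are isomorphic if and only if the incidence itemsets S = { S_u | u ∈ V_G } over E_G and T = { T_h | h ∈ V_H } over E_H are isomorphic as itemsets. -/

import Mathlib

open Finset

section Aux

variable {V W : Type*} [DecidableEq V] [DecidableEq W]

lemma aux_eq_pair {e : Finset V} (he : e.card = 2) {u v : V} (hu : u ∈ e) (hv : v ∈ e)
    (huv : u ≠ v) : e = {u, v} := by
  symm
  apply eq_of_subset_of_card_le
  · intro x hx
    simp only [mem_insert, mem_singleton] at hx
    rcases hx with rfl | rfl <;> assumption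
  · rw [he, card_insert_of_notMem (by simp [huv]), card_singleton]

lemma aux_exists_ne {e : Finset V} (he : e.card = 2) {u : V} (hu : u ∈ e) :
    ∃ v, v ≠ u ∧ e = {u, v} := by
  obtain ⟨a, b, hab, rfl⟩ := card_eq_two.1 he
  simp only [mem_insert, mem_singleton] at hu
  rcases hu with rfl | rfl
  · exact ⟨b, hab.symm, rfl⟩
  · exact ⟨a, hab, by rw [pair_comm]⟩

lemma aux_star_nonempty (E : Finset (Finset V)) (hn : ∀ v : V, ∃ e ∈ E, v ∈ e) (u : V) :
    (E.filter (fun e => u ∈ e)).Nonempty := by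
  obtain ⟨e, he, hu⟩ := hn u
  exact ⟨e, mem_filter.2 ⟨he, hu⟩⟩

/-- If two distinct vertices have the same star, that star is the singleton `{{u,v}}`. -/
lemma aux_star_eq (E : Finset (Finset V)) (h2 : ∀ e ∈ E, e.card = 2)
    (hn : ∀ v : V, ∃ e ∈ E, v ∈ e) {u v : V} (huv : u ≠ v)
    (hS : E.filter (fun e => u ∈ e) = E.filter (fun e => v ∈ e)) :
    E.filter (fun e => u ∈ e) = {({u, v} : Finset V)} := by
  have key : ∀ e' ∈ E.filter (fun e => u ∈ e), e' = {u, v} := by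
    intro e' he'
    have h1 := mem_filter.1 he'
    have h1' := mem_filter.1 (hS ▸ he')
    exact aux_eq_pair (h2 _ h1.1) h1.2 h1'.2 huv
  obtain ⟨e, he⟩ := aux_star_nonempty E hn u
  exact eq_singleton_iff_unique_mem.2 ⟨(key e he) ▸ he, key⟩

lemma aux_pair_mem (E : Finset (Finset V)) (h2 : ∀ e ∈ E, e.card = 2) {u v : V} (huv : u ≠ v) :
    (({u, v} : Finset V) ∈ E ↔
      (E.filter (fun e => u ∈ e) ∩ E.filter (fun e => v ∈ e)).Nonempty) := by
  constructor
  · intro h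
    exact ⟨{u, v}, mem_inter.2 ⟨mem_filter.2 ⟨h, by simp⟩, mem_filter.2 ⟨h, by simp⟩⟩⟩
  · rintro ⟨e, he⟩
    obtain ⟨h1, h2'⟩ := mem_inter.1 he
    have h1 := mem_filter.1 h1
    have h2' := mem_filter.1 h2'
    exact (aux_eq_pair (h2 _ h1.1) h1.2 h2'.2 huv) ▸ h1.1

lemma aux_image_inj {E s t : Finset V} {J : V → W} (hinj : Set.InjOn J ↑E)
    (hs : s ⊆ E) (ht : t ⊆ E) (h : s.image J = t.image J) : s = t := by
  ext e
  constructor <;> intro he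
  · have : J e ∈ t.image J := h ▸ mem_image_of_mem J he
    obtain ⟨e', he', heq⟩ := mem_image.1 this
    rwa [hinj (ht he') (hs he) heq] at he'
  · have : J e ∈ s.image J := h ▸ mem_image_of_mem J he
    obtain ⟨e', he', heq⟩ := mem_image.1 this
    rwa [hinj (hs he') (ht he) heq] at he'

/-- Star-equivalence classes have at most 2 elements. -/
lemma aux_class_card (E : Finset (Finset V)) [Fintype V] (h2 : ∀ e ∈ E, e.card = 2)
    (hn : ∀ v : V, ∃ e ∈ E, v ∈ e) (s : Finset (Finset V)) :
    (univ.filter (fun w => E.filter (fun e => w ∈ e) = s)).card ≤ 2 := by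
  set C := univ.filter (fun w => E.filter (fun e => w ∈ e) = s) with hC
  by_cases hone : ∀ v ∈ C, ∀ w ∈ C, v = w
  · exact le_trans (card_le_one.2 hone) one_le_two
  · push_neg at hone
    obtain ⟨v, hv, w, hw, hvw⟩ := hone
    have hv' := (mem_filter.1 hv).2
    have hw' := (mem_filter.1 hw).2
    have hsing := aux_star_eq E h2 hn hvw (hv'.trans hw'.symm)
    have hsub : C ⊆ {v, w} := by
      intro x hx
      have hx' := (mem_filter.1 hx).2
      have : ({v, w} : Finset V) ∈ E.filter (fun e => x ∈ e) := by
        rw [hx', ← hv', hsing]; exact mem_singleton_self _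
      have := (mem_filter.1 this).2
      simpa using this
    exact le_trans (card_le_card hsub) (card_insert_le _ _ |>.trans (by simp))

end Aux

theorem stmt_11 {VG VH : Type*} [Fintype VG] [Fintype VH] [DecidableEq VG] [DecidableEq VH]
    (EG : Finset (Finset VG)) (EH : Finset (Finset VH))
    (hG : ∀ e ∈ EG, e.card = 2) (hH : ∀ e ∈ EH, e.card = 2)
    (hniG : ∀ v : VG, ∃ e ∈ EG, v ∈ e) (hniH : ∀ v : VH, ∃ e ∈ EH, v ∈ e) :
    (∃ σ : VG → VH, Function.Bijective σ ∧
        ∀ v w : VG, ({v, w} : Finset VG) ∈ EG ↔ ({σ v, σ w} : Finset VH) ∈ EH) ↔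
    (∃ J : Finset VG → Finset VH, Set.BijOn J ↑EG ↑EH ∧
        (Finset.univ.image (fun u : VG => EG.filter (fun e => u ∈ e))).image
            (fun A => A.image J) =
          Finset.univ.image (fun h : VH => EH.filter (fun e => h ∈ e))) := by
  constructor
  · -- Forward: graph iso gives itemset iso
    rintro ⟨σ, hb, hedge⟩
    set τ := Equiv.ofBijective σ hb with hτ
    have hτσ : ∀ x, σ (τ.symm x) = x := fun x => τ.apply_symm_apply x
    have key : ∀ e : Finset VG, e.card = 2 → (e ∈ EG ↔ e.image σ ∈ EH) := by
      intro e he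
      obtain ⟨v, w, hvw, rfl⟩ := card_eq_two.1 he
      rw [image_insert, image_singleton]
      exact hedge v w
    refine ⟨Finset.image σ, ⟨?_, ?_, ?_⟩, ?_⟩
    · intro e he
      exact (key e (hG e he)).1 he
    · exact (Finset.image_injective hb.injective).injOn
    · intro f hf
      have hf' : (f : Finset VH) ∈ EH := hf
      have hcard : (f.image τ.symm).card = 2 := by
        rw [card_image_of_injective _ τ.symm.injective, hH _ hf']
      refine ⟨f.image τ.symm, ?_, ?_⟩
      · have himg : (f.image τ.symm).image σ = f := by
          rw [image_image]
          have : σ ∘ τ.symm = id := funext hτσ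
          rw [this, image_id]
        have := (key _ hcard).2 (by rw [himg]; exact hf')
        exact this
      · show (f.image τ.symm).image σ = f
        rw [image_image]
        have : σ ∘ τ.symm = id := funext hτσ
        rw [this, image_id]
    · -- star images equal
      have hstar : ∀ u : VG, (EG.filter (fun e => u ∈ e)).image (Finset.image σ)
          = EH.filter (fun e => σ u ∈ e) := by
        intro u
        ext f
        simp only [mem_image, mem_filter]
        constructor
        · rintro ⟨e, ⟨heE, hue⟩, rfl⟩
          exact ⟨(key e (hG e heE)).1 heE, mem_image_of_mem σ hue⟩
        · rintro ⟨hfE, huf⟩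
          refine ⟨f.image τ.symm, ⟨?_, ?_⟩, ?_⟩
          · have hcard : (f.image τ.symm).card = 2 := by
              rw [card_image_of_injective _ τ.symm.injective, hH _ hfE]
            apply (key _ hcard).2
            rw [image_image]
            have : σ ∘ τ.symm = id := funext hτσ
            rw [this, image_id]
            exact hfE
          · exact mem_image.2 ⟨σ u, huf, τ.symm_apply_apply u⟩
          · rw [image_image]
            have : σ ∘ τ.symm = id := funext hτσ
            rw [this, image_id]
      calc (univ.image (fun u : VG => EG.filter (fun e => u ∈ e))).image
              (fun A => A.image (Finset.image σ))
          = univ.image (fun u : VG => (EG.filter (fun e => u ∈ e)).image (Finset.image σ)) := by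
            rw [image_image]; rfl
        _ = univ.image (fun u : VG => EH.filter (fun e => σ u ∈ e)) := by
            apply image_congr; intro u _; exact hstar u
        _ = (univ.image σ).image (fun h : VH => EH.filter (fun e => h ∈ e)) := by
            rw [image_image]; rfl
        _ = univ.image (fun h : VH => EH.filter (fun e => h ∈ e)) := by
            rw [image_univ_of_surjective hb.surjective]
  · -- Backward: itemset iso gives graph iso
    rintro ⟨J, ⟨hmap, hinj, hsurj⟩, hsets⟩
    -- membership facts from the itemset equality
    have h1 : ∀ u : VG, ∃ h : VH,
        EH.filter (fun e => h ∈ e) = (EG.filter (fun e => u ∈ e)).image J := by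
      intro u
      have hmem : (EG.filter (fun e => u ∈ e)).image J
          ∈ univ.image (fun h : VH => EH.filter (fun e => h ∈ e)) := by
        rw [← hsets]
        apply mem_image.2
        exact ⟨EG.filter (fun e => u ∈ e), mem_image.2 ⟨u, mem_univ u, rfl⟩, rfl⟩
      obtain ⟨h, -, hh⟩ := mem_image.1 hmem
      exact ⟨h, hh⟩
    have h2 : ∀ y : VH, ∃ u : VG,
        (EG.filter (fun e => u ∈ e)).image J = EH.filter (fun e => y ∈ e) := by
      intro y
      have hmem : EH.filter (fun e => y ∈ e)
          ∈ (univ.image (fun u : VG => EG.filter (fun e => u ∈ e))).image (fun A => A.image J) := by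
        rw [hsets]
        exact mem_image.2 ⟨y, mem_univ y, rfl⟩
      obtain ⟨A, hA, hAJ⟩ := mem_image.1 hmem
      obtain ⟨u, -, rfl⟩ := mem_image.1 hA
      exact ⟨u, hAJ⟩
    have hsub : ∀ u : VG, EG.filter (fun e => u ∈ e) ⊆ EG := fun u => filter_subset _ _
    have hsubH : ∀ y : VH, EH.filter (fun e => y ∈ e) ⊆ EH := fun y => filter_subset _ _
    -- the crucial cardinality matching
    have hcard : ∀ u : VG,
        (univ.filter (fun w => EG.filter (fun e => w ∈ e) = EG.filter (fun e => u ∈ e))).card =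
        (univ.filter (fun y : VH =>
          EH.filter (fun e => y ∈ e) = (EG.filter (fun e => u ∈ e)).image J)).card := by
      intro u
      set C := univ.filter (fun w => EG.filter (fun e => w ∈ e) = EG.filter (fun e => u ∈ e))
        with hCdef
      set F := univ.filter (fun y : VH =>
          EH.filter (fun e => y ∈ e) = (EG.filter (fun e => u ∈ e)).image J) with hFdef
      have hCu : u ∈ C := mem_filter.2 ⟨mem_univ _, rfl⟩
      have hF1 : F.Nonempty := by
        obtain ⟨h, hh⟩ := h1 u
        exact ⟨h, mem_filter.2 ⟨mem_univ _, hh⟩⟩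
      have hC2 : C.card ≤ 2 := aux_class_card EG hG hniG _
      have hF2 : F.card ≤ 2 := aux_class_card EH hH hniH _
      have hiff : 2 ≤ C.card ↔ 2 ≤ F.card := by
        constructor
        · intro hc
          obtain ⟨v, hv, hvu⟩ := exists_mem_ne hc u
          have hSv := (mem_filter.1 hv).2
          have hsing := aux_star_eq EG hG hniG hvu.symm
            ((mem_filter.1 hCu).2.trans hSv.symm)
          -- star of u is {{u,v}}
          have heE : ({u, v} : Finset VG) ∈ EG := by
            have : ({u, v} : Finset VG) ∈ EG.filter (fun e => u ∈ e) := by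
              rw [hsing]; exact mem_singleton_self _
            exact (mem_filter.1 this).1
          have hfEH : J {u, v} ∈ EH := hmap heE
          -- every endpoint of J {u,v} is in F
          have hfsub : J ({u, v} : Finset VG) ⊆ F := by
            intro x hx
            obtain ⟨w, hw⟩ := h2 x
            have hfTx : J ({u, v} : Finset VG) ∈ EH.filter (fun e => x ∈ e) :=
              mem_filter.2 ⟨hfEH, hx⟩
            rw [← hw] at hfTx
            obtain ⟨e'', he'', heq⟩ := mem_image.1 hfTx
            have he''E := (hsub w) he''
            have : e'' = ({u, v} : Finset VG) := hinj he''E heE heq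
            subst this
            have hwmem : w ∈ ({u, v} : Finset VG) := (mem_filter.1 he'').2
            have hSw : EG.filter (fun e => w ∈ e) = EG.filter (fun e => u ∈ e) := by
              simp only [mem_insert, mem_singleton] at hwmem
              rcases hwmem with rfl | rfl
              · rfl
              · exact hSv
            refine mem_filter.2 ⟨mem_univ _, ?_⟩
            rw [← hw, hSw]
          calc 2 = (J ({u, v} : Finset VG)).card := (hH _ hfEH).symm
            _ ≤ F.card := card_le_card hfsub
        · intro hf
          obtain ⟨x, hx, y, hy, hxy⟩ := one_lt_card.1 hf
          have hTx := (mem_filter.1 hx).2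
          have hTy := (mem_filter.1 hy).2
          have hsingH := aux_star_eq EH hH hniH hxy (hTx.trans hTy.symm)
          -- (S u).image J = {f} where f = {x,y}
          have hSuimg : (EG.filter (fun e => u ∈ e)).image J = {({x, y} : Finset VH)} := by
            rw [← hTx, hsingH]
          have hfEH : ({x, y} : Finset VH) ∈ EH := by
            have : ({x, y} : Finset VH) ∈ EH.filter (fun e => x ∈ e) := by
              rw [hsingH]; exact mem_singleton_self _
            exact (mem_filter.1 this).1
          obtain ⟨e, he⟩ := aux_star_nonempty EG hniG u
          have hJe : J e = ({x, y} : Finset VH) := by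
            have : J e ∈ ({({x, y} : Finset VH)} : Finset (Finset VH)) := by
              rw [← hSuimg]; exact mem_image_of_mem J he
            simpa using this
          have hSu : EG.filter (fun e' => u ∈ e') = {e} := by
            apply eq_singleton_iff_unique_mem.2
            refine ⟨he, ?_⟩
            intro e' he'
            have hJe' : J e' = ({x, y} : Finset VH) := by
              have : J e' ∈ ({({x, y} : Finset VH)} : Finset (Finset VH)) := by
                rw [← hSuimg]; exact mem_image_of_mem J he'
              simpa using this
            exact hinj ((hsub u) he') ((hsub u) he) (hJe'.trans hJe.symm)
          have heE := ((hsub u) he)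
          have hue : u ∈ e := (mem_filter.1 he).2
          obtain ⟨v, hvu, hev⟩ := aux_exists_ne (hG e heE) hue
          -- S v = S u = {e}
          have hSv : EG.filter (fun e' => v ∈ e') = {e} := by
            apply eq_singleton_iff_unique_mem.2
            constructor
            · exact mem_filter.2 ⟨heE, by rw [hev]; simp⟩
            · intro e' he'
              obtain ⟨h, hh⟩ := h1 v
              have hfe : J e ∈ EH.filter (fun e'' => h ∈ e'') := by
                rw [hh]
                apply mem_image_of_mem
                exact mem_filter.2 ⟨heE, by rw [hev]; simp⟩
              have hhf : h ∈ ({x, y} : Finset VH) := by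
                rw [hJe] at hfe
                exact (mem_filter.1 hfe).2
              have hTh : EH.filter (fun e'' => h ∈ e'') = {({x, y} : Finset VH)} := by
                simp only [mem_insert, mem_singleton] at hhf
                rcases hhf with rfl | rfl
                · exact hsingH
                · rw [hTy, ← hTx]; exact hsingH
              have : J e' ∈ ({({x, y} : Finset VH)} : Finset (Finset VH)) := by
                rw [← hTh, hh]
                exact mem_image_of_mem J he'
              have hJe' : J e' = ({x, y} : Finset VH) := by simpa using this
              exact hinj ((hsub v) he') heE (hJe'.trans hJe.symm)
          have hvC : v ∈ C := by
            refine mem_filter.2 ⟨mem_univ _, ?_⟩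
            rw [hSv, hSu]
          exact one_lt_card.2 ⟨v, hvC, u, hCu, hvu⟩
      have hCpos : 0 < C.card := card_pos.2 ⟨u, hCu⟩
      have hFpos : 0 < F.card := card_pos.2 hF1
      omega
    -- construct default function VG → VH
    have hg0 : ∀ _ : VG, ∃ _ : VH, True := by
      intro w
      obtain ⟨e, heE, -⟩ := hniG w
      have hJe : J e ∈ EH := hmap heE
      have : (J e).Nonempty := card_pos.1 (by rw [hH _ hJe]; norm_num)
      exact ⟨this.choose, trivial⟩
    choose g0 _hg0 using hg0
    -- choose the class-wise bijections
    have hex : ∀ s : Finset (Finset VG), ∃ g : VG → VH, ∀ u : VG,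
        s = EG.filter (fun e => u ∈ e) →
        Set.BijOn g ↑(univ.filter (fun w => EG.filter (fun e => w ∈ e) = s))
          ↑(univ.filter (fun y : VH => EH.filter (fun e => y ∈ e) = s.image J)) := by
      intro s
      by_cases hs : ∃ u : VG, s = EG.filter (fun e => u ∈ e)
      · obtain ⟨u, rfl⟩ := hs
        set C := univ.filter (fun w => EG.filter (fun e => w ∈ e) = EG.filter (fun e => u ∈ e))
          with hCdef
        set F := univ.filter (fun y : VH =>
            EH.filter (fun e => y ∈ e) = (EG.filter (fun e => u ∈ e)).image J) with hFdef
        have hc : C.card = F.card := hcard u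
        let eqv := Finset.equivOfCardEq hc
        refine ⟨fun w => if hw : w ∈ C then (eqv ⟨w, hw⟩ : VH) else g0 w, ?_⟩
        intro u' _
        refine ⟨?_, ?_, ?_⟩
        · intro w hw
          have hw' : w ∈ C := hw
          simp only [dif_pos hw']
          exact (eqv ⟨w, hw'⟩).2
        · intro a ha b hb hab
          have ha' : a ∈ C := ha
          have hb' : b ∈ C := hb
          simp only [dif_pos ha', dif_pos hb'] at hab
          have := eqv.injective (Subtype.ext hab)
          exact congrArg Subtype.val this
        · intro y hy
          have hy' : y ∈ F := hy
          refine ⟨(eqv.symm ⟨y, hy'⟩ : VG), (eqv.symm ⟨y, hy'⟩).2, ?_⟩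
          simp only [dif_pos (eqv.symm ⟨y, hy'⟩).2]
          have : eqv ⟨(eqv.symm ⟨y, hy'⟩ : VG), (eqv.symm ⟨y, hy'⟩).2⟩ = ⟨y, hy'⟩ := by
            rw [Subtype.coe_eta]
            exact eqv.apply_symm_apply _
          rw [this]
      · exact ⟨g0, fun u hu => absurd ⟨u, hu⟩ hs⟩
    choose g hg using hex
    set σ : VG → VH := fun u => g (EG.filter (fun e => u ∈ e)) u with hσdef
    have hbijg : ∀ u : VG, Set.BijOn (g (EG.filter (fun e => u ∈ e)))
        ↑(univ.filter (fun w => EG.filter (fun e => w ∈ e) = EG.filter (fun e => u ∈ e)))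
        ↑(univ.filter (fun y : VH =>
          EH.filter (fun e => y ∈ e) = (EG.filter (fun e => u ∈ e)).image J)) :=
      fun u => hg _ u rfl
    have hσcong : ∀ u w : VG,
        EG.filter (fun e => w ∈ e) = EG.filter (fun e => u ∈ e) →
        σ w = g (EG.filter (fun e => u ∈ e)) w := by
      intro u w h
      simp only [hσdef]
      rw [h]
    have hTσ : ∀ u : VG,
        EH.filter (fun e => σ u ∈ e) = (EG.filter (fun e => u ∈ e)).image J := by
      intro u
      have hu : u ∈ univ.filter
          (fun w => EG.filter (fun e => w ∈ e) = EG.filter (fun e => u ∈ e)) := by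
        simp
      have := (hbijg u).mapsTo (by exact_mod_cast hu)
      simpa using this
    have hinjσ : Function.Injective σ := by
      intro a b hab
      have hTab : (EG.filter (fun e => a ∈ e)).image J = (EG.filter (fun e => b ∈ e)).image J := by
        rw [← hTσ a, ← hTσ b, hab]
      have hS : EG.filter (fun e => a ∈ e) = EG.filter (fun e => b ∈ e) :=
        aux_image_inj hinj (hsub a) (hsub b) hTab
      have ha' : a ∈ univ.filter
          (fun w => EG.filter (fun e => w ∈ e) = EG.filter (fun e => b ∈ e)) := by
        simp [hS]
      have hb' : b ∈ univ.filter
          (fun w => EG.filter (fun e => w ∈ e) = EG.filter (fun e => b ∈ e)) := by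
        simp
      apply (hbijg b).injOn (by exact_mod_cast ha') (by exact_mod_cast hb')
      rw [← hσcong b a hS, ← hσcong b b rfl, hab]
    have hsurjσ : Function.Surjective σ := by
      intro y
      obtain ⟨u, hu⟩ := h2 y
      have hy : y ∈ univ.filter (fun h : VH =>
          EH.filter (fun e => h ∈ e) = (EG.filter (fun e => u ∈ e)).image J) := by
        simp [hu]
      obtain ⟨w, hw, hgw⟩ := (hbijg u).surjOn (by exact_mod_cast hy)
      have hw' : EG.filter (fun e => w ∈ e) = EG.filter (fun e => u ∈ e) := by
        simp only [Finset.coe_filter, Set.mem_setOf_eq] at hw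
        exact hw.2
      exact ⟨w, by rw [hσcong u w hw', hgw]⟩
    refine ⟨σ, ⟨hinjσ, hsurjσ⟩, ?_⟩
    intro u v
    by_cases huv : u = v
    · subst huv
      have h1' : ({u, u} : Finset VG) = {u} := by simp
      have h2' : ({σ u, σ u} : Finset VH) = {σ u} := by simp
      rw [h1', h2']
      constructor <;> intro h
      · exact absurd (hG _ h) (by simp)
      · exact absurd (hH _ h) (by simp)
    · have hσuv : σ u ≠ σ v := fun h => huv (hinjσ h)
      rw [aux_pair_mem EG hG huv, aux_pair_mem EH hH hσuv]
      constructor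
      · rintro ⟨e, he⟩
        obtain ⟨heu, hev⟩ := mem_inter.1 he
        refine ⟨J e, mem_inter.2 ⟨?_, ?_⟩⟩
        · rw [hTσ u]; exact mem_image_of_mem J heu
        · rw [hTσ v]; exact mem_image_of_mem J hev
      · rintro ⟨f, hf⟩
        obtain ⟨hfu, hfv⟩ := mem_inter.1 hf
        rw [hTσ u] at hfu
        rw [hTσ v] at hfv
        obtain ⟨e, he, hJe⟩ := mem_image.1 hfu
        obtain ⟨e', he', hJe'⟩ := mem_image.1 hfv
        have : e = e' := hinj ((hsub u) he) ((hsub v) he') (hJe.trans hJe'.symm)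
        subst this
        exact ⟨e, mem_inter.2 ⟨he, he'⟩⟩
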